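/- The function $f(t) = 1 - e^{-t}$ is geometrically concave on $(0,\infty)$: $1 - e^{-x^{\alpha} y^{1-\alpha}} \ge (1-e^{-x})^{\alpha} (1-e^{-y})^{1-\alpha}$ for all $x, y > 0$ and $\alpha \in [0,1]$. -/

import Mathlib

open Real Set

private lemma aux_one_sub_exp_pos {t : ℝ} (ht : 0 < t) : 0 < 1 - Real.exp (-t) := by
  have : Real.exp (-t) < 1 := by
    rw [Real.exp_lt_one_iff]; linarith
  linarith

private lemma aux_slope_mono : MonotoneOn (fun t : ℝ => (Real.exp t - 1) / t) (Ioi 0) := by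
  have hderiv : ∀ t ∈ interior (Ioi (0:ℝ)), HasDerivAt (fun t : ℝ => (Real.exp t - 1) / t)
      ((Real.exp t * t - (Real.exp t - 1)) / t ^ 2) t := by
    intro t ht
    rw [interior_Ioi] at ht
    have := ((Real.hasDerivAt_exp t).sub_const 1).div (hasDerivAt_id t) (ne_of_gt ht)
    exact this.congr_deriv (by simp)
  apply monotoneOn_of_deriv_nonneg (convex_Ioi 0)
  · apply ContinuousOn.div (Real.continuous_exp.continuousOn.sub continuousOn_const)
      continuousOn_id
    intro t ht; exact ne_of_gt ht
  · intro t ht; exact (hderiv t ht).differentiableAt.differentiableWithinAt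
  · intro t ht
    rw [(hderiv t ht).deriv]
    rw [interior_Ioi] at ht
    apply div_nonneg _ (sq_nonneg t)
    -- exp t * t - (exp t - 1) ≥ 0  ⟺  exp t * (1 - t) ≤ 1
    have h1 : 1 - t ≤ Real.exp (-t) := by
      have := Real.add_one_le_exp (-t); linarith
    have h2 : Real.exp t * (1 - t) ≤ Real.exp t * Real.exp (-t) :=
      mul_le_mul_of_nonneg_left h1 (Real.exp_pos t).le
    rw [← Real.exp_add] at h2
    simp at h2
    nlinarith [Real.exp_pos t]

private lemma aux_phi_anti : AntitoneOn (fun t : ℝ => t / (Real.exp t - 1)) (Ioi 0) := by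
  intro s hs t ht hst
  have hs' : (0:ℝ) < s := hs
  have ht' : (0:ℝ) < t := ht
  have hes : 0 < Real.exp s - 1 := by linarith [Real.one_lt_exp_iff.2 hs']
  have het : 0 < Real.exp t - 1 := by linarith [Real.one_lt_exp_iff.2 ht']
  show t / (Real.exp t - 1) ≤ s / (Real.exp s - 1)
  rw [div_le_div_iff₀ het hes]
  have := aux_slope_mono hs ht hst
  simp only at this
  rw [div_le_div_iff₀ hs' ht'] at this
  nlinarith

private lemma aux_hasDerivAt (u : ℝ) :
    HasDerivAt (fun u : ℝ => Real.log (1 - Real.exp (-Real.exp u)))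
      (Real.exp u * Real.exp (-Real.exp u) / (1 - Real.exp (-Real.exp u))) u := by
  have h1 : HasDerivAt (fun u : ℝ => -Real.exp u) (-Real.exp u) u :=
    (Real.hasDerivAt_exp u).neg
  have h2 : HasDerivAt (fun u : ℝ => Real.exp (-Real.exp u))
      (Real.exp (-Real.exp u) * (-Real.exp u)) u := (Real.hasDerivAt_exp _).comp u h1
  have h3 : HasDerivAt (fun u : ℝ => 1 - Real.exp (-Real.exp u))
      (Real.exp (-Real.exp u) * Real.exp u) u := by
    have := h2.const_sub 1
    exact this.congr_deriv (by ring)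
  have hne : 1 - Real.exp (-Real.exp u) ≠ 0 :=
    ne_of_gt (aux_one_sub_exp_pos (Real.exp_pos u))
  have := h3.log hne
  convert this using 1; ring

private lemma aux_concave :
    ConcaveOn ℝ univ (fun u : ℝ => Real.log (1 - Real.exp (-Real.exp u))) := by
  apply Antitone.concaveOn_univ_of_deriv
  · exact fun u => (aux_hasDerivAt u).differentiableAt
  · have hderiv : deriv (fun u : ℝ => Real.log (1 - Real.exp (-Real.exp u))) =
        fun u => Real.exp u * Real.exp (-Real.exp u) / (1 - Real.exp (-Real.exp u)) :=
      funext fun u => (aux_hasDerivAt u).deriv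
    rw [hderiv]
    intro u v huv
    have key : ∀ w : ℝ, Real.exp w * Real.exp (-Real.exp w) / (1 - Real.exp (-Real.exp w)) =
        Real.exp w / (Real.exp (Real.exp w) - 1) := by
      intro w
      have h1 : 0 < 1 - Real.exp (-Real.exp w) := aux_one_sub_exp_pos (Real.exp_pos w)
      have h2 : 0 < Real.exp (Real.exp w) - 1 := by
        linarith [Real.one_lt_exp_iff.2 (Real.exp_pos w)]
      rw [div_eq_div_iff (ne_of_gt h1) (ne_of_gt h2)]
      have : Real.exp (-Real.exp w) * Real.exp (Real.exp w) = 1 := by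
        rw [← Real.exp_add]; simp
      linear_combination Real.exp w * this
    simp only []
    rw [key u, key v]
    exact aux_phi_anti (Real.exp_pos u) (Real.exp_pos v) (Real.exp_le_exp.2 huv)

theorem one_sub_exp_neg_geom_concave (x y α : ℝ) (hx : 0 < x) (hy : 0 < y)
    (hα0 : 0 ≤ α) (hα1 : α ≤ 1) :
    1 - Real.exp (-(x ^ α * y ^ (1 - α))) ≥
      (1 - Real.exp (-x)) ^ α * (1 - Real.exp (-y)) ^ (1 - α) := by
  have hβ0 : 0 ≤ 1 - α := by linarith
  have hc := aux_concave.2 (mem_univ (Real.log x)) (mem_univ (Real.log y)) hα0 hβ0 (by ring)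
  simp only [smul_eq_mul] at hc
  -- identify the argument
  have hm : Real.exp (α * Real.log x + (1 - α) * Real.log y) = x ^ α * y ^ (1 - α) := by
    rw [Real.exp_add, Real.rpow_def_of_pos hx, Real.rpow_def_of_pos hy]
    ring_nf
  have hx' : 0 < 1 - Real.exp (-x) := aux_one_sub_exp_pos hx
  have hy' : 0 < 1 - Real.exp (-y) := aux_one_sub_exp_pos hy
  rw [Real.exp_log hx, Real.exp_log hy, hm] at hc
  have hm' : 0 < x ^ α * y ^ (1 - α) :=
    mul_pos (Real.rpow_pos_of_pos hx α) (Real.rpow_pos_of_pos hy (1 - α))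
  have hpos : 0 < 1 - Real.exp (-(x ^ α * y ^ (1 - α))) := aux_one_sub_exp_pos hm'
  have := Real.exp_le_exp.2 hc
  rw [Real.exp_log hpos, Real.exp_add] at this
  rw [ge_iff_le, Real.rpow_def_of_pos hx', Real.rpow_def_of_pos hy',
    mul_comm (Real.log (1 - Real.exp (-x))) α,
    mul_comm (Real.log (1 - Real.exp (-y))) (1 - α)]
  exact this
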